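/- arXiv:2309.08437 — 2 statements merged into one kernel-verified Lean document; each statement's English description precedes it below -/
import Mathlib

section
/- Let k ≥ 2 be an integer, let d_1, …, d_k be positive integers and w_1, …, w_k be integers with strictly increasing slopes w_1/d_1 < w_2/d_2 < ⋯ < w_k/d_k. Set d = d_1 + ⋯ + d_k and w = w_1 + ⋯ + w_k. Then ∑_{i=1}^{k} (k + 1 − i)·(w_i − d_i·w/d) < 0, a strict inequality of rational numbers. -/
open Finset

private lemma prefix_neg (k m : ℕ) (hm0 : 0 < m) (hmk : m < k) (d x : ℕ → ℚ)
    (hd : ∀ i < k, 0 < d i) (hx : ∑ i ∈ range k, x i = 0)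
    (hs : ∀ i j, i < j → j < k → x i / d i < x j / d j) :
    ∑ i ∈ range m, x i < 0 := by
  rcases le_or_gt (x m / d m) 0 with ht | ht
  · have : ∀ i ∈ range m, x i < 0 := by
      intro i hi
      rw [mem_range] at hi
      have hdi := hd i (hi.trans hmk)
      have h1 : x i / d i < 0 := lt_of_lt_of_le (hs i m hi hmk) ht
      have := mul_neg_of_neg_of_pos h1 hdi
      rwa [div_mul_cancel₀ _ (ne_of_gt hdi)] at this
    exact Finset.sum_neg this ⟨0, mem_range.mpr hm0⟩
  · have hpos : ∀ i ∈ Ico m k, 0 < x i := by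
      intro i hi
      rw [mem_Ico] at hi
      have hdi := hd i hi.2
      have h1 : 0 < x i / d i := by
        rcases eq_or_lt_of_le hi.1 with h | h
        · rwa [← h]
        · exact ht.trans (hs m i h hi.2)
      have := mul_pos h1 hdi
      rwa [div_mul_cancel₀ _ (ne_of_gt hdi)] at this
    have hsplit : ∑ i ∈ range m, x i + ∑ i ∈ Ico m k, x i = 0 := by
      rw [range_eq_Ico, Finset.sum_Ico_consecutive _ (Nat.zero_le m) hmk.le,
        ← range_eq_Ico, hx]
    have : 0 < ∑ i ∈ Ico m k, x i :=
      Finset.sum_pos hpos ⟨m, mem_Ico.mpr ⟨le_refl m, hmk⟩⟩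
    linarith

private lemma abel_sum (x : ℕ → ℚ) : ∀ n : ℕ,
    ∑ m ∈ range n, ∑ i ∈ range (m + 1), x i
      = ∑ i ∈ range n, ((n : ℚ) - (i : ℚ)) * x i := by
  intro n
  induction n with
  | zero => simp
  | succ n ih =>
      rw [Finset.sum_range_succ, ih, Finset.sum_range_succ x n]
      push_cast
      rw [Finset.sum_range_succ (fun i => ((n : ℚ) + 1 - (i : ℚ)) * x i) n]
      have h2 : ∑ i ∈ range n, ((n : ℚ) + 1 - (i : ℚ)) * x i
          = ∑ i ∈ range n, ((n : ℚ) - (i : ℚ)) * x i + ∑ i ∈ range n, x i := by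
        rw [← Finset.sum_add_distrib]
        exact Finset.sum_congr rfl (fun i _ => by ring)
      rw [h2]
      ring

/-- For a partition `d = d_1 + ⋯ + d_k` into positive integers and integers `w_i`
with strictly increasing slopes `w_1/d_1 < ⋯ < w_k/d_k`, one has
`∑ (k + 1 - i) · (w_i - d_i · w/d) < 0`, where the index `i` is `0`-based so the
weight of the `i`-th term is `k - i`. -/
theorem antidominant_pairing_neg (k : ℕ) (hk : 2 ≤ k) (d : ℕ → ℕ) (w : ℕ → ℤ)
    (hd : ∀ i < k, 0 < d i)
    (hslope : ∀ i j, i < j → j < k →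
      (w i : ℚ) / (d i : ℚ) < (w j : ℚ) / (d j : ℚ)) :
    ∑ i ∈ range k, ((k : ℚ) - (i : ℚ)) *
      ((w i : ℚ) - (d i : ℚ) *
        ((∑ j ∈ range k, (w j : ℚ)) / (∑ j ∈ range k, (d j : ℚ)))) < 0 := by
  set D : ℚ := ∑ j ∈ range k, (d j : ℚ) with hD
  set W : ℚ := ∑ j ∈ range k, (w j : ℚ) with hW
  have hDpos : 0 < D := by
    apply Finset.sum_pos
    · intro i hi
      exact_mod_cast hd i (mem_range.mp hi)
    · exact ⟨0, mem_range.mpr (by omega)⟩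
  set x : ℕ → ℚ := fun i => (w i : ℚ) - (d i : ℚ) * (W / D) with hxdef
  have hdq : ∀ i < k, 0 < ((d i : ℚ)) := fun i hi => by exact_mod_cast hd i hi
  have hx : ∑ i ∈ range k, x i = 0 := by
    simp only [hxdef, Finset.sum_sub_distrib, ← Finset.sum_mul]
    rw [← hW, ← hD, mul_div_cancel₀ _ (ne_of_gt hDpos)]
    ring
  have hs : ∀ i j, i < j → j < k → x i / (d i : ℚ) < x j / (d j : ℚ) := by
    intro i j hij hjk
    have hdi := hdq i (hij.trans hjk)
    have hdj := hdq j hjk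
    have e : ∀ m, 0 < ((d m : ℚ)) → x m / (d m : ℚ) = (w m : ℚ) / (d m : ℚ) - W / D := by
      intro m hm
      rw [hxdef]
      field_simp
    rw [e i hdi, e j hdj]
    have := hslope i j hij hjk
    linarith
  have key : ∑ i ∈ range k, ((k : ℚ) - (i : ℚ)) * x i < 0 := by
    rw [← abel_sum x k]
    have hsplit : ∑ m ∈ range k, ∑ i ∈ range (m + 1), x i
        = ∑ m ∈ range (k - 1), ∑ i ∈ range (m + 1), x i + ∑ i ∈ range k, x i := by
      have : k = (k - 1) + 1 := by omega
      rw [this, Finset.sum_range_succ]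
      congr 2 <;> omega
    rw [hsplit, hx, add_zero]
    apply Finset.sum_neg
    · intro m hm
      rw [mem_range] at hm
      exact prefix_neg k (m + 1) (Nat.succ_pos m) (by omega) _ x hdq hx hs
    · exact ⟨0, mem_range.mpr (by omega)⟩
  exact key
end

section
/- Let d be a positive integer and w an integer. Let e_1, …, e_d be the standard basis of ℝ^d, let ρ = ((d−1)/2, (d−3)/2, …, (1−d)/2) ∈ ℝ^d, and let W(d) ⊂ ℝ^d be the zonotope consisting of all vectors of the form ∑_{1≤i<j≤d} c_{ij}·(e_i − e_j) with real coefficients satisfying |c_{ij}| ≤ 1/2. Then there exists a dominant integer vector χ ∈ ℤ^d (i.e. with χ_1 ≥ χ_2 ≥ ⋯ ≥ χ_d) such that χ + ρ − (w/d)·(1, 1, …, 1) ∈ W(d) if and only if d divides w. -/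
private lemma zono_coord (d : ℕ) (c : Fin d → Fin d → ℝ) (t : Fin d) :
    ((∑ i : Fin d, ∑ j : Fin d,
        if i < j then c i j • (Pi.single i (1 : ℝ) - Pi.single j (1 : ℝ)) else 0 : Fin d → ℝ)) t
      = ∑ i : Fin d, ∑ j : Fin d,
        (if i < j then c i j * ((if t = i then (1:ℝ) else 0) - (if t = j then 1 else 0)) else 0) := by
  simp [Finset.sum_apply, apply_ite (fun f : Fin d → ℝ => f t), Pi.single_apply]

private lemma sumIoi (d : ℕ) (t : Fin d) (a : ℝ) :
    ∑ j : Fin d, (if t < j then a else 0) = ((d - 1 - (t : ℕ) : ℕ) : ℝ) * a := by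
  rw [Finset.sum_ite, Finset.sum_const, Finset.sum_const_zero, add_zero]
  have : Finset.univ.filter (fun j => t < j) = Finset.Ioi t := by ext x; simp
  rw [this, Fin.card_Ioi]
  simp [nsmul_eq_mul]

private lemma sumIio (d : ℕ) (t : Fin d) (a : ℝ) :
    ∑ i : Fin d, (if i < t then a else 0) = ((t : ℕ) : ℝ) * a := by
  rw [Finset.sum_ite, Finset.sum_const, Finset.sum_const_zero, add_zero]
  have : Finset.univ.filter (fun i => i < t) = Finset.Iio t := by ext x; simp
  rw [this, Fin.card_Iio]
  simp [nsmul_eq_mul]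

/-- Let `ρ = ((d-1)/2, (d-3)/2, …, (1-d)/2) ∈ ℝ^d` and let `W(d)` be the zonotope
of all vectors `∑_{i<j} c_{ij} (e_i - e_j)` with `|c_{ij}| ≤ 1/2`.  Then there is
a dominant integer vector `χ` (i.e. `χ_1 ≥ χ_2 ≥ ⋯ ≥ χ_d`) with
`χ + ρ - (w/d)·(1,…,1) ∈ W(d)` if and only if `d ∣ w`. -/
theorem dominant_weight_in_zonotope_iff_dvd (d : ℕ) (hd : 0 < d) (w : ℤ) :
    (∃ χ : Fin d → ℤ,
      (∀ i j : Fin d, i ≤ j → χ j ≤ χ i) ∧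
      ∃ c : Fin d → Fin d → ℝ, (∀ i j, |c i j| ≤ 1 / 2) ∧
        (fun i : Fin d => (χ i : ℝ) + (((d : ℝ) - 1) / 2 - (i : ℕ)) - (w : ℝ) / (d : ℝ)) =
          ∑ i : Fin d, ∑ j : Fin d,
            if i < j then c i j • (Pi.single i (1 : ℝ) - Pi.single j (1 : ℝ)) else 0) ↔
    (d : ℤ) ∣ w := by
  have hdR : (0:ℝ) < (d:ℝ) := by exact_mod_cast hd
  have hd1 : (1:ℕ) ≤ d := hd
  set i0 : Fin d := ⟨0, hd⟩ with hi0
  set iL : Fin d := ⟨d - 1, Nat.sub_lt hd one_pos⟩ with hiL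
  have hcast0 : ((i0 : Fin d) : ℕ) = 0 := rfl
  have hcastL : ((iL : Fin d) : ℕ) = d - 1 := rfl
  have hdm1 : ((d - 1 : ℕ) : ℝ) = (d:ℝ) - 1 := by
    rw [Nat.cast_sub hd1]; push_cast; ring
  constructor
  · rintro ⟨χ, hmono, c, hc, heq⟩
    have h0 := congrFun heq i0
    have hL := congrFun heq iL
    rw [zono_coord] at h0 hL
    -- upper bound at i0
    have hb0 : (∑ i : Fin d, ∑ j : Fin d,
        (if i < j then c i j * ((if i0 = i then (1:ℝ) else 0) - (if i0 = j then 1 else 0)) else 0))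
        ≤ ((d:ℝ) - 1) / 2 := by
      have key : ∀ i j : Fin d,
          (if i < j then c i j * ((if i0 = i then (1:ℝ) else 0) - (if i0 = j then 1 else 0)) else 0)
          ≤ (if i0 = i then (if i < j then (1/2:ℝ) else 0) else 0) := by
        intro i j
        rcases lt_or_ge i j with h | h
        · have hj : ¬ (i0 = j) := by
            intro hj
            have hle : i0 ≤ i := Fin.le_def.mpr (Nat.zero_le _)
            exact absurd (lt_of_le_of_lt hle h) (by rw [← hj]; exact lt_irrefl _)
          by_cases hi : i0 = i
          · simp only [if_pos h, if_pos hi, if_neg hj]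
            have h2 := (abs_le.mp (hc i j)).2
            have : c i j * ((1:ℝ) - 0) = c i j := by ring
            rw [this]
            linarith
          · simp [h, hi, hj]
        · simp [not_lt.mpr h]
      calc _ ≤ ∑ i : Fin d, ∑ j : Fin d,
              (if i0 = i then (if i < j then (1/2:ℝ) else 0) else 0) :=
            Finset.sum_le_sum (fun i _ => Finset.sum_le_sum (fun j _ => key i j))
        _ = ∑ j : Fin d, (if i0 < j then (1/2:ℝ) else 0) := by
            have step : ∀ i : Fin d,
                (∑ j : Fin d, if i0 = i then (if i < j then (1/2:ℝ) else 0) else 0)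
                = if i0 = i then (∑ j : Fin d, if i < j then (1/2:ℝ) else 0) else 0 := by
              intro i; rw [Finset.sum_ite_irrel, Finset.sum_const_zero]
            rw [Finset.sum_congr rfl (fun i _ => step i),
              Finset.sum_ite_eq Finset.univ i0
                (fun i => ∑ j : Fin d, if i < j then (1/2:ℝ) else 0),
              if_pos (Finset.mem_univ _)]
        _ = ((d - 1 - (i0 : ℕ) : ℕ) : ℝ) * (1/2) := sumIoi d i0 (1/2)
        _ ≤ ((d:ℝ) - 1) / 2 := by
            rw [hcast0, Nat.sub_zero, hdm1]; ring_nf; linarith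
    -- lower bound at iL
    have hbL : -(((d:ℝ) - 1) / 2) ≤ (∑ i : Fin d, ∑ j : Fin d,
        (if i < j then c i j * ((if iL = i then (1:ℝ) else 0) - (if iL = j then 1 else 0)) else 0)) := by
      have key : ∀ i j : Fin d,
          (if iL = j then (if i < j then (-(1/2):ℝ) else 0) else 0)
          ≤ (if i < j then c i j * ((if iL = i then (1:ℝ) else 0) - (if iL = j then 1 else 0)) else 0) := by
        intro i j
        rcases lt_or_ge i j with h | h
        · have hi : ¬ (iL = i) := by
            intro hi
            have hjle : j ≤ iL := Fin.le_def.mpr (by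
              show (j : ℕ) ≤ d - 1
              have := j.isLt; omega)
            exact absurd (lt_of_lt_of_le h hjle) (by rw [hi]; exact lt_irrefl _)
          by_cases hj : iL = j
          · simp only [if_pos h, if_pos hj, if_neg hi]
            have h2 := (abs_le.mp (hc i j)).2
            have : c i j * ((0:ℝ) - 1) = -(c i j) := by ring
            rw [this]
            linarith
          · simp [h, hi, hj]
        · simp [not_lt.mpr h]
      calc -(((d:ℝ) - 1) / 2)
          = ∑ i : Fin d, ∑ j : Fin d,
              (if iL = j then (if i < j then (-(1/2):ℝ) else 0) else 0) := by
            have step : ∀ i : Fin d, (∑ j : Fin d,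
                if iL = j then (if i < j then (-(1/2):ℝ) else 0) else 0)
                = (if i < iL then (-(1/2):ℝ) else 0) := by
              intro i
              rw [Finset.sum_ite_eq Finset.univ iL (fun j => if i < j then (-(1/2):ℝ) else 0),
                if_pos (Finset.mem_univ _)]
            rw [Finset.sum_congr rfl (fun i _ => step i), sumIio d iL (-(1/2)), hcastL, hdm1]
            ring
        _ ≤ _ := Finset.sum_le_sum (fun i _ => Finset.sum_le_sum (fun j _ => key i j))
    -- extract inequalities on χ
    have hv0 : (((i0 : Fin d) : ℕ) : ℝ) = 0 := by rw [hcast0]; norm_num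
    have hvL : (((iL : Fin d) : ℕ) : ℝ) = (d:ℝ) - 1 := by rw [hcastL]; exact hdm1
    rw [hv0] at h0
    rw [hvL] at hL
    have hle : (χ i0 : ℝ) ≤ (w:ℝ)/(d:ℝ) := by linarith [h0, hb0]
    have hge : (w:ℝ)/(d:ℝ) ≤ (χ iL : ℝ) := by linarith [hL, hbL]
    have hmono' : (χ iL : ℝ) ≤ (χ i0 : ℝ) := by
      exact_mod_cast hmono i0 iL (Fin.le_def.mpr (Nat.zero_le _))
    have hx : (χ i0 : ℝ) = (w:ℝ)/(d:ℝ) := le_antisymm hle (by linarith)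
    rw [eq_div_iff (ne_of_gt hdR)] at hx
    have hw : (w:ℝ) = (d:ℝ) * (χ i0 : ℝ) := by rw [mul_comm]; exact hx.symm
    exact ⟨χ i0, by exact_mod_cast hw⟩
  · rintro ⟨k, rfl⟩
    refine ⟨fun _ => k, fun i j _ => le_refl _, fun _ _ => 1/2,
      fun i j => by rw [abs_le]; constructor <;> norm_num, ?_⟩
    funext t
    rw [zono_coord]
    beta_reduce
    have split : ∀ i j : Fin d,
        (if i < j then (1/2:ℝ) * ((if t = i then (1:ℝ) else 0) - (if t = j then 1 else 0)) else 0)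
        = (if t = i then (if i < j then (1/2:ℝ) else 0) else 0)
          - (if t = j then (if i < j then (1/2:ℝ) else 0) else 0) := by
      intro i j
      by_cases h : i < j
      · by_cases h1 : t = i
        · have h2 : ¬ t = j := by rw [h1]; exact ne_of_lt h
          norm_num [h, h1, h2, h.ne, h.ne']
        · by_cases h2 : t = j
          · norm_num [h, h1, h2, h.ne, h.ne']
          · norm_num [h, h1, h2, h.ne, h.ne']
      · simp [h]
    rw [Finset.sum_congr rfl (fun i _ => Finset.sum_congr rfl (fun j _ => split i j))]
    have sumsub : ∑ i : Fin d, ∑ j : Fin d,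
        ((if t = i then (if i < j then (1/2:ℝ) else 0) else 0)
          - (if t = j then (if i < j then (1/2:ℝ) else 0) else 0))
        = (∑ i : Fin d, ∑ j : Fin d, (if t = i then (if i < j then (1/2:ℝ) else 0) else 0))
          - (∑ i : Fin d, ∑ j : Fin d, (if t = j then (if i < j then (1/2:ℝ) else 0) else 0)) := by
      rw [← Finset.sum_sub_distrib]
      exact Finset.sum_congr rfl (fun i _ => Finset.sum_sub_distrib _ _)
    rw [sumsub]
    have hA : (∑ i : Fin d, ∑ j : Fin d, (if t = i then (if i < j then (1/2:ℝ) else 0) else 0))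
        = ((d - 1 - (t : ℕ) : ℕ) : ℝ) * (1/2) := by
      have step : ∀ i : Fin d,
          (∑ j : Fin d, if t = i then (if i < j then (1/2:ℝ) else 0) else 0)
          = if t = i then (∑ j : Fin d, if i < j then (1/2:ℝ) else 0) else 0 := by
        intro i; rw [Finset.sum_ite_irrel, Finset.sum_const_zero]
      rw [Finset.sum_congr rfl (fun i _ => step i),
        Finset.sum_ite_eq Finset.univ t (fun i => ∑ j : Fin d, if i < j then (1/2:ℝ) else 0),
        if_pos (Finset.mem_univ _)]
      exact sumIoi d t (1/2)
    have hB : (∑ i : Fin d, ∑ j : Fin d, (if t = j then (if i < j then (1/2:ℝ) else 0) else 0))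
        = ((t : ℕ) : ℝ) * (1/2) := by
      have step : ∀ i : Fin d,
          (∑ j : Fin d, if t = j then (if i < j then (1/2:ℝ) else 0) else 0)
          = (if i < t then (1/2:ℝ) else 0) := by
        intro i
        rw [Finset.sum_ite_eq Finset.univ t (fun j => if i < j then (1/2:ℝ) else 0),
          if_pos (Finset.mem_univ _)]
      rw [Finset.sum_congr rfl (fun i _ => step i)]
      exact sumIio d t (1/2)
    rw [hA, hB]
    have ht : ((d - 1 - (t : ℕ) : ℕ) : ℝ) = (d:ℝ) - 1 - ((t : ℕ) : ℝ) := by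
      have := t.isLt
      rw [Nat.cast_sub (by omega), Nat.cast_sub hd1]
      push_cast; ring
    rw [ht]
    push_cast
    field_simp
    ring
end
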